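/- Let n ∈ ℤ^d_{>0} be a velocity vector and let Z_n := [0,e_1] + ... + [0,e_d] + [0,n] be the lonely runner zonotope. Then max_{1≤i≤d} n_i ≤ #(int(Z_n) ∩ ℤ^d) ≤ Σ_{i=1}^d n_i. Moreover, if max_{1≤i≤d} n_i ≥ Φ(d), where Φ(d) := Σ_{ℓ=1}^d φ(ℓ), then #(int(Z_n) ∩ ℤ^d) ≥ #(int(Z_{ℓ_d}) ∩ ℤ^d), where ℓ_d := (1,2,...,d). -/

import Mathlib

open Pointwise

/-- A point of `ℝ^d` all of whose coordinates are integers. -/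
def IsLatticePoint {d : ℕ} (x : Fin d → ℝ) : Prop := ∀ i, ∃ z : ℤ, x i = (z : ℝ)

namespace LRZAux

variable {d : ℕ}

/-- The open description of the interior of the lonely runner zonotope. -/
def U (n : Fin d → ℤ) : Set (Fin d → ℝ) :=
  {x | ∃ t : ℝ, (0 < t ∧ t < 1) ∧ ∀ i, t * n i < x i ∧ x i < t * n i + 1}

/-- The closed description of the lonely runner zonotope. -/
def W (n : Fin d → ℤ) : Set (Fin d → ℝ) :=
  {x | ∃ t : ℝ, (0 ≤ t ∧ t ≤ 1) ∧ ∀ i, t * n i ≤ x i ∧ x i ≤ t * n i + 1}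

lemma cube_eq :
    (∑ j : Fin d, segment ℝ (0 : Fin d → ℝ) (Pi.single j 1)) =
      {x : Fin d → ℝ | ∀ i, 0 ≤ x i ∧ x i ≤ 1} := by
  ext x
  rw [Set.mem_fintype_sum]
  constructor
  · rintro ⟨g, hg, rfl⟩
    intro i
    have hc : ∀ j, ∃ θ : ℝ, (0 ≤ θ ∧ θ ≤ 1) ∧
        ∀ i, g j i = θ * (if i = j then (1:ℝ) else 0) := by
      intro j
      have mem := hg j
      rw [segment_eq_image ℝ] at mem
      obtain ⟨θ, hθ, hθ2⟩ := mem
      refine ⟨θ, ⟨hθ.1, hθ.2⟩, fun i => ?_⟩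
      rw [← hθ2]
      simp [Pi.single_apply]
    choose c hc1 hc2 using hc
    have hxi : (∑ j, g j) i = c i := by
      rw [Finset.sum_apply]
      rw [Finset.sum_congr rfl (fun j _ => hc2 j i)]
      simp [mul_ite, Finset.sum_ite_eq]
    rw [hxi]
    exact hc1 i
  · intro hx
    refine ⟨fun j => (x j) • (Pi.single j (1:ℝ) : Fin d → ℝ), fun j => ?_, ?_⟩
    · rw [segment_eq_image ℝ]
      exact ⟨x j, Set.mem_Icc.2 ⟨(hx j).1, (hx j).2⟩, by simp⟩
    · funext i
      simp [Finset.sum_apply, Pi.single_apply, mul_ite, Finset.sum_ite_eq]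

lemma Z_eq (n : Fin d → ℤ) :
    (∑ j : Fin d, segment ℝ (0 : Fin d → ℝ) (Pi.single j 1)) +
      segment ℝ (0 : Fin d → ℝ) (fun i => (n i : ℝ)) = W n := by
  rw [cube_eq]
  ext x
  rw [Set.mem_add]
  constructor
  · rintro ⟨c, hc, s, hs, rfl⟩
    rw [segment_eq_image ℝ] at hs
    obtain ⟨t, ht, rfl⟩ := hs
    refine ⟨t, ⟨ht.1, ht.2⟩, fun i => ?_⟩
    have h01 := hc i
    simp only [Pi.add_apply, Pi.smul_apply, Pi.zero_apply, smul_eq_mul, mul_zero, zero_add]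
    constructor <;> linarith [h01.1, h01.2]
  · rintro ⟨t, ⟨ht0, ht1⟩, hb⟩
    refine ⟨fun i => x i - t * n i, ?_, t • (fun i => (n i : ℝ)), ?_, ?_⟩
    · intro i
      dsimp only
      constructor <;> linarith [(hb i).1, (hb i).2]
    · rw [segment_eq_image ℝ]
      exact ⟨t, Set.mem_Icc.2 ⟨ht0, ht1⟩, by simp⟩
    · funext i
      simp only [Pi.add_apply, Pi.smul_apply, smul_eq_mul]
      ring

lemma U_subset_W (n : Fin d → ℤ) : U n ⊆ W n := by
  rintro x ⟨t, ⟨ht0, ht1⟩, hb⟩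
  exact ⟨t, ⟨ht0.le, ht1.le⟩, fun i => ⟨(hb i).1.le, (hb i).2.le⟩⟩

lemma U_open (n : Fin d → ℤ) : IsOpen (U n) := by
  have : U n = ⋃ t ∈ Set.Ioo (0:ℝ) 1,
      Set.pi Set.univ (fun i => Set.Ioo (t * n i) (t * n i + 1)) := by
    ext x
    simp only [U, Set.mem_setOf_eq, Set.mem_iUnion, Set.mem_pi, Set.mem_univ, Set.mem_Ioo,
      forall_true_left, exists_prop, Set.mem_Ioo]
  rw [this]
  exact isOpen_biUnion fun t _ => isOpen_set_pi Set.univ.toFinite fun i _ => isOpen_Ioo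

/-- Combination of a point of `W` with a point of `U` (with positive weight on the `U` point)
lies in `U`. -/
lemma combo_mem_U (n : Fin d → ℤ) {z w : Fin d → ℝ} (hz : z ∈ W n) (hw : w ∈ U n)
    {b : ℝ} (hb0 : 0 < b) (hb1 : b ≤ 1) : (1 - b) • z + b • w ∈ U n := by
  obtain ⟨s, ⟨hs0, hs1⟩, hzb⟩ := hz
  obtain ⟨t, ⟨ht0, ht1⟩, hwb⟩ := hw
  refine ⟨(1 - b) * s + b * t, ⟨?_, ?_⟩, fun i => ?_⟩
  · nlinarith
  · nlinarith
  · have h1 := (hzb i).1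
    have h2 := (hzb i).2
    have h3 := (hwb i).1
    have h4 := (hwb i).2
    simp only [Pi.add_apply, Pi.smul_apply, smul_eq_mul]
    constructor <;> nlinarith [mul_le_mul_of_nonneg_left h1 (by linarith : (0:ℝ) ≤ 1 - b),
      mul_le_mul_of_nonneg_left h2 (by linarith : (0:ℝ) ≤ 1 - b),
      mul_lt_mul_of_pos_left h3 hb0, mul_lt_mul_of_pos_left h4 hb0]

lemma w0_mem_U (n : Fin d → ℤ) : (fun i => (1/2 : ℝ) * n i + 1/2) ∈ U n :=
  ⟨1/2, ⟨by norm_num, by norm_num⟩, fun i => ⟨by norm_num, by norm_num⟩⟩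

lemma interior_Z_eq (n : Fin d → ℤ) :
    interior ((∑ j : Fin d, segment ℝ (0 : Fin d → ℝ) (Pi.single j 1)) +
      segment ℝ (0 : Fin d → ℝ) (fun i => (n i : ℝ))) = U n := by
  rw [Z_eq]
  apply subset_antisymm
  · intro x hx
    set w : Fin d → ℝ := fun i => (1/2 : ℝ) * n i + 1/2 with hw
    have hwU : w ∈ U n := w0_mem_U n
    -- find small ε > 0 with x + ε • (x - w) ∈ W n
    have hcont : Filter.Tendsto (fun e : ℝ => x + e • (x - w)) (nhds 0) (nhds x) := by
      have h1 : Continuous (fun e : ℝ => x + e • (x - w)) := by continuity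
      have h2 := h1.tendsto 0
      simpa using h2
    have hmem : ∀ᶠ e : ℝ in nhds 0, x + e • (x - w) ∈ interior (W n) :=
      hcont.eventually (isOpen_interior.mem_nhds hx)
    obtain ⟨ε, hε0, hε⟩ := Metric.eventually_nhds_iff.1 hmem
    set e : ℝ := ε / 2 with he
    have he0 : 0 < e := by positivity
    have hze : x + e • (x - w) ∈ W n := by
      refine interior_subset (hε ?_)
      simp only [dist_zero_right, Real.norm_eq_abs, abs_of_pos he0]
      linarith
    set b : ℝ := e / (1 + e) with hb
    have hb0 : 0 < b := by positivity
    have hb1 : b ≤ 1 := by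
      rw [hb, div_le_one (by linarith)]; linarith
    have hxeq : x = (1 - b) • (x + e • (x - w)) + b • w := by
      funext i
      simp only [Pi.add_apply, Pi.smul_apply, Pi.sub_apply, smul_eq_mul]
      have : (1 : ℝ) + e ≠ 0 := by linarith
      have hbe : b * (1 + e) = e := by rw [hb]; exact div_mul_cancel₀ e this
      linear_combination (x i - w i) * hbe
    rw [hxeq]
    exact combo_mem_U n hze hwU hb0 hb1
  · exact interior_maximal (U_subset_W n) (U_open n)

/-- The set of interior lattice points, viewed through the open description. -/
lemma lattice_facts (n : Fin d → ℤ) (hpos : ∀ i, 0 < n i) {x : Fin d → ℝ}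
    (hx : x ∈ U n) (hlat : IsLatticePoint x) :
    (∀ i, (⌊x i⌋ : ℝ) = x i) ∧ (∀ i, 1 ≤ ⌊x i⌋ ∧ ⌊x i⌋ ≤ n i) ∧
      (∀ i j, (⌊x i⌋ - 1) * n j < ⌊x j⌋ * n i) := by
  obtain ⟨t, ⟨ht0, ht1⟩, hb⟩ := hx
  have hfl : ∀ i, (⌊x i⌋ : ℝ) = x i := by
    intro i
    obtain ⟨z, hz⟩ := hlat i
    rw [hz, Int.floor_intCast]
  have hni : ∀ i, (0:ℝ) < (n i : ℝ) := fun i => by exact_mod_cast hpos i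
  refine ⟨hfl, fun i => ?_, fun i j => ?_⟩
  · constructor
    · have h0 : (0:ℝ) < (⌊x i⌋ : ℝ) := by
        rw [hfl i]; nlinarith [(hb i).1, hni i]
      have : (0:ℤ) < ⌊x i⌋ := by exact_mod_cast h0
      omega
    · have : (⌊x i⌋ : ℝ) < (n i : ℝ) + 1 := by
        rw [hfl i]; nlinarith [(hb i).2, hni i]
      have := Int.lt_add_one_iff.1 (by exact_mod_cast this)
      exact this
  · have h1 : (⌊x i⌋ : ℝ) - 1 < t * n i := by
      rw [hfl i]; linarith [(hb i).2]
    have h2 : t * n j < (⌊x j⌋ : ℝ) := by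
      rw [hfl j]; exact (hb j).1
    have key : ((⌊x i⌋ : ℝ) - 1) * n j < (⌊x j⌋ : ℝ) * n i := by
      nlinarith [hni i, hni j]
    exact_mod_cast key

section Counting

variable (hd : 0 < d)

/-- The minimum of `⌊x i⌋ / n i`, as a rational number. -/
noncomputable def F (hd : 0 < d) (n : Fin d → ℤ) (x : Fin d → ℝ) : ℚ :=
  Finset.univ.inf' ⟨⟨0, hd⟩, Finset.mem_univ _⟩ (fun i => (⌊x i⌋ : ℚ) / ((n i : ℚ)))

lemma F_injOn (n : Fin d → ℤ) (hpos : ∀ i, 0 < n i) :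
    Set.InjOn (F hd n) {x | x ∈ U n ∧ IsLatticePoint x} := by
  have hniQ : ∀ i, (0:ℚ) < (n i : ℚ) := fun i => by exact_mod_cast hpos i
  have key : ∀ x ∈ {x | x ∈ U n ∧ IsLatticePoint x}, ∀ y ∈ {x | x ∈ U n ∧ IsLatticePoint x},
      F hd n x = F hd n y → ∀ j, ⌊y j⌋ ≤ ⌊x j⌋ := by
    rintro x ⟨hxU, hxL⟩ y ⟨hyU, hyL⟩ hF j
    by_contra hlt
    push_neg at hlt
    obtain ⟨k, -, hk⟩ := Finset.exists_mem_eq_inf'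
      (⟨⟨0, hd⟩, Finset.mem_univ _⟩ : (Finset.univ : Finset (Fin d)).Nonempty)
      (fun i => (⌊y i⌋ : ℚ) / ((n i : ℚ)))
    obtain ⟨-, -, hcross⟩ := lattice_facts n hpos hyU hyL
    have h1 : ((⌊y j⌋ : ℚ) - 1) / (n j : ℚ) < (⌊y k⌋ : ℚ) / (n k : ℚ) := by
      rw [div_lt_div_iff₀ (hniQ j) (hniQ k)]
      exact_mod_cast hcross j k
    have h2 : F hd n x ≤ (⌊x j⌋ : ℚ) / (n j : ℚ) :=
      Finset.inf'_le _ (Finset.mem_univ j)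
    have h3 : (⌊x j⌋ : ℚ) ≤ (⌊y j⌋ : ℚ) - 1 := by
      have : ⌊x j⌋ ≤ ⌊y j⌋ - 1 := by omega
      exact_mod_cast this
    have h4 : (⌊x j⌋ : ℚ) / (n j : ℚ) ≤ ((⌊y j⌋ : ℚ) - 1) / (n j : ℚ) := by
      gcongr
      exact (hniQ j).le
    have : F hd n x < F hd n y := by
      calc F hd n x ≤ (⌊x j⌋ : ℚ) / (n j : ℚ) := h2
        _ ≤ ((⌊y j⌋ : ℚ) - 1) / (n j : ℚ) := h4
        _ < (⌊y k⌋ : ℚ) / (n k : ℚ) := h1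
        _ = F hd n y := hk.symm
    rw [hF] at this
    exact lt_irrefl _ this
  intro x hx y hy hF
  have e1 := key x hx y hy hF
  have e2 := key y hy x hx hF.symm
  funext i
  have hfx := (lattice_facts n hpos hx.1 hx.2).1 i
  have hfy := (lattice_facts n hpos hy.1 hy.2).1 i
  have : ⌊x i⌋ = ⌊y i⌋ := le_antisymm (e2 i) (e1 i)
  rw [← hfx, ← hfy, this]

lemma F_achieves (n : Fin d → ℤ) (x : Fin d → ℝ) :
    ∃ i, F hd n x = (⌊x i⌋ : ℚ) / ((n i : ℚ)) := by
  obtain ⟨k, -, hk⟩ := Finset.exists_mem_eq_inf'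
    (⟨⟨0, hd⟩, Finset.mem_univ _⟩ : (Finset.univ : Finset (Fin d)).Nonempty)
    (fun i => (⌊x i⌋ : ℚ) / ((n i : ℚ)))
  exact ⟨k, hk⟩


/-- Generic target finset for the upper bound. -/
lemma F_mapsTo (n : Fin d → ℤ) (hpos : ∀ i, 0 < n i) {x : Fin d → ℝ}
    (hx : x ∈ U n) (hlat : IsLatticePoint x) :
    F hd n x ∈ (Finset.image (fun p : Σ _ : Fin d, ℤ => ((p.2 : ℚ) / (n p.1 : ℚ)))
      (Finset.univ.sigma fun i => Finset.Icc 1 (n i)) : Finset ℚ) := by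
  obtain ⟨i0, hi0⟩ := F_achieves hd n x
  obtain ⟨-, hbd, -⟩ := lattice_facts n hpos hx hlat
  exact Finset.mem_image.2 ⟨⟨i0, ⌊x i0⌋⟩,
    Finset.mem_sigma.2 ⟨Finset.mem_univ _, Finset.mem_Icc.2 ⟨(hbd i0).1, (hbd i0).2⟩⟩, hi0.symm⟩

lemma finite_and_upper (hd : 0 < d) (n : Fin d → ℤ) (hpos : ∀ i, 0 < n i) :
    {x | x ∈ U n ∧ IsLatticePoint x}.Finite ∧
      ({x | x ∈ U n ∧ IsLatticePoint x}.ncard : ℤ) ≤ ∑ i, n i := by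
  classical
  set S := {x | x ∈ U n ∧ IsLatticePoint x} with hS
  set Q : Finset ℚ := Finset.image (fun p : Σ _ : Fin d, ℤ => ((p.2 : ℚ) / (n p.1 : ℚ)))
      (Finset.univ.sigma fun i => Finset.Icc 1 (n i)) with hQ
  have hmaps : ∀ x ∈ S, F hd n x ∈ (Q : Set ℚ) := by
    rintro x ⟨hxU, hxL⟩
    exact F_mapsTo hd n hpos hxU hxL
  have hinj := F_injOn hd n hpos
  have himfin : ((F hd n) '' S).Finite := by
    apply Q.finite_toSet.subset
    rintro _ ⟨x, hx, rfl⟩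
    exact hmaps x hx
  have hfin : S.Finite := Set.Finite.of_finite_image himfin hinj
  refine ⟨hfin, ?_⟩
  have h1 : S.ncard ≤ (Q : Set ℚ).ncard :=
    Set.ncard_le_ncard_of_injOn (F hd n) hmaps hinj Q.finite_toSet
  rw [Set.ncard_coe_finset] at h1
  have h2 : Q.card ≤ ∑ i, (n i).toNat := by
    refine (Finset.card_image_le).trans ?_
    rw [Finset.card_sigma]
    apply le_of_eq
    apply Finset.sum_congr rfl
    intro i _
    rw [Int.card_Icc]
    simp
  have h3 : S.ncard ≤ ∑ i, (n i).toNat := h1.trans h2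
  have h4 : ((∑ i, (n i).toNat : ℕ) : ℤ) = ∑ i, n i := by
    push_cast
    exact Finset.sum_congr rfl fun i _ => Int.toNat_of_nonneg (hpos i).le
  calc (S.ncard : ℤ) ≤ ((∑ i, (n i).toNat : ℕ) : ℤ) := by exact_mod_cast h3
    _ = ∑ i, n i := h4

lemma lower (n : Fin d → ℤ) (hpos : ∀ i, 0 < n i)
    (hfin : {x | x ∈ U n ∧ IsLatticePoint x}.Finite) (i : Fin d) :
    n i ≤ ({x | x ∈ U n ∧ IsLatticePoint x}.ncard : ℤ) := by
  classical
  set S := {x | x ∈ U n ∧ IsLatticePoint x} with hS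
  have hni : (0:ℝ) < (n i : ℝ) := by exact_mod_cast hpos i
  have key : ∀ k : ℤ, k ∈ Finset.Icc 1 (n i) → ∃ x, x ∈ S ∧ x i = (k : ℝ) := by
    intro k hk
    rw [Finset.mem_Icc] at hk
    have hk1 : (1:ℝ) ≤ (k:ℝ) := by exact_mod_cast hk.1
    have hkn : (k:ℝ) ≤ (n i : ℝ) := by exact_mod_cast hk.2
    set lo : ℝ := ((k:ℝ) - 1) / (n i : ℝ) with hlo
    set hi : ℝ := (k:ℝ) / (n i : ℝ) with hhi
    have hlo0 : 0 ≤ lo := div_nonneg (by linarith) hni.le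
    have hhi1 : hi ≤ 1 := by
      rw [hhi, div_le_one hni]; linarith
    have hlh : lo < hi := by
      rw [hlo, hhi, div_lt_div_iff₀ hni hni]; nlinarith
    have hIinf : (Set.Ioo lo hi).Infinite := Set.Ioo_infinite hlh
    have hBfin : (Set.Ioo lo hi ∩ {t : ℝ | ∃ j, ∃ m : ℤ, t * (n j : ℝ) = (m:ℝ)}).Finite := by
      apply Set.Finite.subset (Set.finite_iUnion
        (fun j : Fin d => ((Set.finite_Ioo (0:ℤ) (n j)).image (fun m : ℤ => (m:ℝ) / (n j : ℝ)))))
      rintro t ⟨htI, j, m, hm⟩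
      have hnj : (0:ℝ) < (n j : ℝ) := by exact_mod_cast hpos j
      have ht0 : 0 < t := lt_of_le_of_lt hlo0 htI.1
      have ht1 : t < 1 := lt_of_lt_of_le htI.2 hhi1
      refine Set.mem_iUnion.2 ⟨j, ⟨m, ?_, ?_⟩⟩
      · have hm0 : (0:ℝ) < (m:ℝ) := by rw [← hm]; positivity
        have hm1 : (m:ℝ) < (n j : ℝ) := by rw [← hm]; nlinarith
        constructor
        · exact_mod_cast hm0
        · exact_mod_cast hm1
      · field_simp
        linarith [hm]
    obtain ⟨t, htI, htnB⟩ := ((hIinf.diff hBfin).nonempty : (Set.Ioo lo hi \ _).Nonempty)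
    have htB : ¬ ∃ j, ∃ m : ℤ, t * (n j : ℝ) = (m:ℝ) := fun h => htnB ⟨htI, h⟩
    have ht0 : 0 < t := lt_of_le_of_lt hlo0 htI.1
    have ht1 : t < 1 := lt_of_lt_of_le htI.2 hhi1
    refine ⟨fun j => ((⌊t * (n j : ℝ)⌋ : ℝ) + 1), ⟨⟨t, ⟨ht0, ht1⟩, fun j => ⟨?_, ?_⟩⟩,
      fun j => ⟨⌊t * (n j : ℝ)⌋ + 1, by push_cast; ring⟩⟩, ?_⟩
    · dsimp only
      exact Int.lt_floor_add_one _
    · dsimp only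
      have hle : (⌊t * (n j : ℝ)⌋ : ℝ) ≤ t * (n j : ℝ) := Int.floor_le _
      have hne : (⌊t * (n j : ℝ)⌋ : ℝ) ≠ t * (n j : ℝ) := by
        intro heq
        exact htB ⟨j, ⌊t * (n j : ℝ)⌋, heq.symm⟩
      have := lt_of_le_of_ne hle hne
      linarith
    · dsimp only
      have hfl : ⌊t * (n i : ℝ)⌋ = k - 1 := by
        rw [Int.floor_eq_iff]
        constructor
        · push_cast
          have := htI.1
          rw [hlo, div_lt_iff₀ hni] at this
          linarith
        · push_cast
          have := htI.2
          rw [hhi, lt_div_iff₀ hni] at this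
          linarith
      rw [hfl]
      push_cast
      ring
  set f : ℤ → (Fin d → ℝ) := fun k =>
    if h : k ∈ Finset.Icc 1 (n i) then (key k h).choose else 0 with hf
  have hfS : ∀ k ∈ ((Finset.Icc (1:ℤ) (n i) : Finset ℤ) : Set ℤ), f k ∈ S := by
    intro k hk
    rw [Finset.mem_coe] at hk
    rw [hf]
    simp only [dif_pos hk]
    exact (key k hk).choose_spec.1
  have hfi : ∀ k ∈ ((Finset.Icc (1:ℤ) (n i) : Finset ℤ) : Set ℤ), f k i = (k:ℝ) := by
    intro k hk
    rw [Finset.mem_coe] at hk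
    rw [hf]
    simp only [dif_pos hk]
    exact (key k hk).choose_spec.2
  have hinj : Set.InjOn f ((Finset.Icc (1:ℤ) (n i) : Finset ℤ) : Set ℤ) := by
    intro a ha b hb hab
    have h1 := hfi a ha
    have h2 := hfi b hb
    have : (a:ℝ) = (b:ℝ) := by rw [← h1, ← h2, hab]
    exact_mod_cast this
  have h1 : ((Finset.Icc (1:ℤ) (n i) : Finset ℤ) : Set ℤ).ncard ≤ S.ncard :=
    Set.ncard_le_ncard_of_injOn f hfS hinj hfin
  rw [Set.ncard_coe_finset, Int.card_Icc] at h1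
  have h2 : (n i + 1 - 1).toNat = (n i).toNat := by omega
  rw [h2] at h1
  have h3 : ((n i).toNat : ℤ) ≤ (S.ncard : ℤ) := by exact_mod_cast h1
  rwa [Int.toNat_of_nonneg (hpos i).le] at h3


lemma filter_coprime_card {b : ℕ} (hb : 1 ≤ b) :
    ((Finset.Icc 1 b).filter fun a => Nat.gcd a b = 1).card = b.totient := by
  rcases eq_or_lt_of_le hb with h1 | h2
  · rw [← h1]
    decide
  · have hset : ((Finset.Icc 1 b).filter fun a => Nat.gcd a b = 1) =
        ((Finset.range b).filter b.Coprime) := by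
      ext a
      simp only [Finset.mem_filter, Finset.mem_Icc, Finset.mem_range]
      constructor
      · rintro ⟨⟨h1a, hab⟩, hg⟩
        have hne : a ≠ b := by
          rintro rfl
          rw [Nat.gcd_self] at hg
          omega
        exact ⟨by omega, Nat.coprime_comm.mp hg⟩
      · rintro ⟨hab, hg⟩
        have ha0 : a ≠ 0 := by
          rintro rfl
          have := Nat.coprime_zero_right b |>.mp hg
          omega
        exact ⟨⟨by omega, by omega⟩, Nat.coprime_comm.mp hg⟩
    rw [hset]
    exact (Nat.totient_eq_card_coprime b).symm

/-- Any fraction `a/b` with `1 ≤ a ≤ b ≤ d` lies in the set of reduced Farey fractions. -/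
lemma mem_farey {D : ℕ} (a b : ℕ) (ha : 1 ≤ a) (hab : a ≤ b) (hbd : b ≤ D) :
    ((a:ℚ) / (b:ℚ)) ∈ Finset.image (fun p : Σ _ : ℕ, ℕ => ((p.2 : ℚ) / (p.1 : ℚ)))
      ((Finset.Icc 1 D).sigma fun b => (Finset.Icc 1 b).filter fun a => Nat.gcd a b = 1) := by
  have hb0 : 0 < b := le_trans ha hab
  set g := Nat.gcd a b with hg
  have hg0 : 0 < g := Nat.gcd_pos_of_pos_left b ha
  have hga : g ∣ a := Nat.gcd_dvd_left a b
  have hgb : g ∣ b := Nat.gcd_dvd_right a b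
  set a' := a / g with ha'
  set b' := b / g with hb'
  have haa : a' * g = a := Nat.div_mul_cancel hga
  have hbb : b' * g = b := Nat.div_mul_cancel hgb
  have ha'1 : 1 ≤ a' := Nat.div_pos (Nat.le_of_dvd (by omega) hga) hg0
  have hb'1 : 1 ≤ b' := Nat.div_pos (Nat.le_of_dvd hb0 hgb) hg0
  have hab' : a' ≤ b' := Nat.div_le_div_right hab
  have hb'd : b' ≤ D := le_trans (Nat.div_le_self b g) hbd
  refine Finset.mem_image.2 ⟨⟨b', a'⟩, Finset.mem_sigma.2 ⟨Finset.mem_Icc.2 ⟨hb'1, hb'd⟩,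
    Finset.mem_filter.2 ⟨Finset.mem_Icc.2 ⟨ha'1, hab'⟩, Nat.coprime_div_gcd_div_gcd hg0⟩⟩, ?_⟩
  show ((a' : ℚ) / (b' : ℚ)) = (a:ℚ) / (b:ℚ)
  rw [← haa, ← hbb]
  push_cast
  rw [mul_div_mul_right]
  exact_mod_cast hg0.ne'

lemma upper_can (hd : 0 < d) :
    {x | x ∈ U (fun i : Fin d => ((i:ℕ):ℤ) + 1) ∧ IsLatticePoint x}.ncard ≤
      ∑ b ∈ Finset.Icc 1 d, b.totient := by
  classical
  set n' : Fin d → ℤ := fun i => ((i:ℕ):ℤ) + 1 with hn'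
  have hpos' : ∀ i, 0 < n' i := fun i => by positivity
  set S := {x | x ∈ U n' ∧ IsLatticePoint x} with hS
  set Q : Finset ℚ := Finset.image (fun p : Σ _ : ℕ, ℕ => ((p.2 : ℚ) / (p.1 : ℚ)))
      ((Finset.Icc 1 d).sigma fun b => (Finset.Icc 1 b).filter fun a => Nat.gcd a b = 1) with hQ
  have hmaps : ∀ x ∈ S, F hd n' x ∈ (Q : Set ℚ) := by
    rintro x ⟨hxU, hxL⟩
    obtain ⟨i0, hi0⟩ := F_achieves hd n' x
    obtain ⟨-, hbd, -⟩ := lattice_facts n' hpos' hxU hxL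
    have h1 := (hbd i0).1
    have h2 := (hbd i0).2
    set a : ℕ := (⌊x i0⌋).toNat with ha
    set b : ℕ := (i0 : ℕ) + 1 with hb
    have heq : F hd n' x = (a:ℚ) / (b:ℚ) := by
      have h0 : (0:ℤ) ≤ ⌊x i0⌋ := by omega
      rw [hi0, hn', ha, hb]
      have hcast : ((⌊x i0⌋.toNat : ℕ) : ℚ) = ((⌊x i0⌋ : ℤ) : ℚ) := by
        exact_mod_cast Int.toNat_of_nonneg h0
      rw [hcast]
      push_cast
      ring
    rw [heq]
    have ha1 : 1 ≤ a := by omega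
    have hab : a ≤ b := by
      have : (⌊x i0⌋ : ℤ) ≤ ((i0:ℕ):ℤ) + 1 := h2
      omega
    have hbd2 : b ≤ d := by
      have := i0.isLt
      omega
    exact Finset.mem_coe.2 (mem_farey a b ha1 hab hbd2)
  have hinj := F_injOn hd n' hpos'
  have h1 : S.ncard ≤ (Q : Set ℚ).ncard :=
    Set.ncard_le_ncard_of_injOn (F hd n') hmaps hinj Q.finite_toSet
  rw [Set.ncard_coe_finset] at h1
  refine h1.trans ?_
  refine (Finset.card_image_le).trans ?_
  rw [Finset.card_sigma]
  apply le_of_eq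
  refine Finset.sum_congr rfl fun b hb => ?_
  exact filter_coprime_card (Finset.mem_Icc.1 hb).1

end Counting

end LRZAux

theorem bounds_num_interior_lattice_points_lrc_zonotope
    {d : ℕ} (hd : 2 ≤ d) (n : Fin d → ℤ) (hpos : ∀ i, 0 < n i)
    (hdist : Function.Injective n) (hgcd : Finset.univ.gcd n = 1)
    (Z : Set (Fin d → ℝ))
    (hZ : Z = (∑ j : Fin d, segment ℝ (0 : Fin d → ℝ) (Pi.single j 1)) +
      segment ℝ (0 : Fin d → ℝ) (fun i => (n i : ℝ)))
    -- the lonely runner zonotope for the canonical velocity vector `ℓ_d = (1,2,…,d)`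
    (Zcan : Set (Fin d → ℝ))
    (hZcan : Zcan = (∑ j : Fin d, segment ℝ (0 : Fin d → ℝ) (Pi.single j 1)) +
      segment ℝ (0 : Fin d → ℝ) (fun i => ((i : ℕ) + 1 : ℝ))) :
    (∀ i, n i ≤ ({x | x ∈ interior Z ∧ IsLatticePoint x}.ncard : ℤ)) ∧
      ({x | x ∈ interior Z ∧ IsLatticePoint x}.ncard : ℤ) ≤ ∑ i, n i ∧
      ((∃ i, (∑ ℓ ∈ Finset.Icc 1 d, ℓ.totient : ℤ) ≤ n i) →
        {x | x ∈ interior Zcan ∧ IsLatticePoint x}.ncard ≤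
          {x | x ∈ interior Z ∧ IsLatticePoint x}.ncard) := by
  have hd0 : 0 < d := by omega
  subst hZ
  subst hZcan
  set n' : Fin d → ℤ := fun i => ((i:ℕ):ℤ) + 1 with hn'
  have hseg : (fun i : Fin d => ((i : ℕ) + 1 : ℝ)) = fun i => ((n' i : ℤ) : ℝ) := by
    funext i
    rw [hn']
    push_cast
    ring
  rw [hseg, LRZAux.interior_Z_eq n, LRZAux.interior_Z_eq n']
  obtain ⟨hfin, hupper⟩ := LRZAux.finite_and_upper hd0 n hpos
  refine ⟨fun i => LRZAux.lower n hpos hfin i, hupper, ?_⟩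
  rintro ⟨i, hi⟩
  have h1 : ({x | x ∈ LRZAux.U n' ∧ IsLatticePoint x}.ncard : ℤ) ≤
      ((∑ b ∈ Finset.Icc 1 d, b.totient : ℕ) : ℤ) := by
    exact_mod_cast LRZAux.upper_can hd0
  have h1' : ((∑ b ∈ Finset.Icc 1 d, b.totient : ℕ) : ℤ) =
      (∑ ℓ ∈ Finset.Icc 1 d, ℓ.totient : ℤ) := by push_cast; rfl
  have h2 := LRZAux.lower n hpos hfin i
  have hchain : ({x | x ∈ LRZAux.U n' ∧ IsLatticePoint x}.ncard : ℤ) ≤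
      ({x | x ∈ LRZAux.U n ∧ IsLatticePoint x}.ncard : ℤ) := by
    calc ({x | x ∈ LRZAux.U n' ∧ IsLatticePoint x}.ncard : ℤ)
        ≤ (∑ ℓ ∈ Finset.Icc 1 d, ℓ.totient : ℤ) := by rw [← h1']; exact h1
      _ ≤ n i := hi
      _ ≤ _ := h2
  exact_mod_cast hchain
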